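/- With A as in the PBW setting (generators u_1,…,u_n satisfying Hypothesis 1), suppose v = a_1 u_1 + ⋯ + a_n u_n with a_i ≠ 0 for some i < n, and v^p = 0. Then v^{p-1} ∉ A u_n, and the subalgebra E generated by v and u_n is isomorphic to k[s,t]/(s^p, t^p) (the group algebra of an elementary abelian p-group of rank 2); in particular v^{p-1} u_n^{p-1} ≠ 0. -/

import Mathlib

open MvPolynomial

section Aux
variable {A : Type} [Ring A] {n p : ℕ}

abbrev PBWmon (u : Fin n → A) (g : Fin n → ℕ) : A :=
  ((List.finRange n).map fun i => u i ^ g i).prod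

lemma mem_take_lt {j : ℕ} {x : Fin n} (hx : x ∈ (List.finRange n).take j) : (x : ℕ) < j := by
  rw [List.mem_iff_getElem] at hx
  obtain ⟨i, hi, rfl⟩ := hx
  have hi' := hi
  simp [List.length_take] at hi'
  rw [List.getElem_take]
  simp
  omega

lemma mem_drop_lt {j : ℕ} {x : Fin n} (hx : x ∈ (List.finRange n).drop (j+1)) : j < (x : ℕ) := by
  rw [List.mem_iff_getElem] at hx
  obtain ⟨i, hi, rfl⟩ := hx
  rw [List.getElem_drop]
  simp
  omega

lemma PBWmon_split (u : Fin n → A) (g : Fin n → ℕ) (j : Fin n)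
    (hg : ∀ m : Fin n, j < m → g m = 0) :
    PBWmon u g = (((List.finRange n).take (j:ℕ)).map fun i => u i ^ g i).prod * u j ^ g j := by
  have hlen : (j:ℕ) < (List.finRange n).length := by simp [j.isLt]
  have hsplit : List.finRange n = (List.finRange n).take (j:ℕ) ++
      (List.finRange n).drop (j:ℕ) := (List.take_append_drop _ _).symm
  have hdrop : (List.finRange n).drop (j:ℕ) = j :: (List.finRange n).drop ((j:ℕ)+1) := by
    rw [List.drop_eq_getElem_cons hlen]
    simp
  have hone : (((List.finRange n).drop ((j:ℕ)+1)).map fun i => u i ^ g i).prod = 1 := by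
    apply List.prod_eq_one
    intro x hx
    rw [List.mem_map] at hx
    obtain ⟨m, hm, rfl⟩ := hx
    have := mem_drop_lt hm
    rw [hg m (by exact this), pow_zero]
  conv_lhs => rw [PBWmon, hsplit]
  rw [List.map_append, List.prod_append, hdrop]
  rw [List.map_cons, List.prod_cons, hone, mul_one]

end Aux

section Aux2
variable {A : Type} [Ring A] {n p : ℕ}

lemma PBWmon_take_congr (u : Fin n → A) (g1 g2 : Fin n → ℕ) (j : Fin n)
    (h : ∀ m : Fin n, (m : ℕ) < (j : ℕ) → g1 m = g2 m) :
    (((List.finRange n).take (j:ℕ)).map fun i => u i ^ g1 i) =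
      (((List.finRange n).take (j:ℕ)).map fun i => u i ^ g2 i) := by
  apply List.map_congr_left
  intro x hx
  rw [h x (mem_take_lt hx)]

lemma PBWmon_mul_pow (u : Fin n → A) (g : Fin n → ℕ) (j : Fin n)
    (hg : ∀ m : Fin n, j < m → g m = 0) (e : ℕ) :
    PBWmon u g * u j ^ e = PBWmon u (Function.update g j (g j + e)) := by
  have hg' : ∀ m : Fin n, j < m → Function.update g j (g j + e) m = 0 := by
    intro m hm
    rw [Function.update_of_ne (by exact fun h => absurd h (by rintro rfl; exact lt_irrefl _ hm))]
    exact hg m hm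
  rw [PBWmon_split u g j hg, PBWmon_split u _ j hg',
    PBWmon_take_congr u (Function.update g j (g j + e)) g j
      (fun m hm => Function.update_of_ne (fun h => by subst h; omega) _ _),
    Function.update_self, mul_assoc, ← pow_add]

lemma PBWmon_eq_zero (u : Fin n → A) (hpow : ∀ i, u i ^ p = 0) (g : Fin n → ℕ) (j : Fin n)
    (hj : p ≤ g j) : PBWmon u g = 0 := by
  apply List.prod_eq_zero
  rw [List.mem_map]
  refine ⟨j, by simp [List.mem_finRange], ?_⟩
  rw [← Nat.sub_add_cancel hj, pow_add, hpow, mul_zero]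

lemma PBWmon_single (u : Fin n → A) (j : Fin n) (e : ℕ) :
    PBWmon u (Function.update (fun _ => 0) j e) = u j ^ e := by
  have hg : ∀ m : Fin n, j < m → Function.update (fun _ => (0:ℕ)) j e m = 0 := fun m hm =>
    Function.update_of_ne (fun h => by subst h; exact lt_irrefl _ hm) _ _
  rw [PBWmon_split u _ j hg, Function.update_self]
  have : (((List.finRange n).take (j:ℕ)).map fun i =>
      u i ^ (Function.update (fun _ => (0:ℕ)) j e i)).prod = 1 := by
    apply List.prod_eq_one
    intro x hx
    rw [List.mem_map] at hx
    obtain ⟨m, hm, rfl⟩ := hx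
    have := mem_take_lt hm
    rw [Function.update_of_ne (fun h => by subst h; omega), pow_zero]
  rw [this, one_mul]

end Aux2

section Aux3
variable (k : Type) [Field k] {A : Type} [Ring A] [Algebra k A] {n : ℕ} (p : ℕ)

def SSmod (u : Fin n → A) (j : ℕ) : Submodule k A :=
  Submodule.span k {x | ∃ f : Fin n → Fin p,
    (∃ m : Fin n, j ≤ (m : ℕ) ∧ 0 < (f m : ℕ)) ∧ x = PBWmon u fun i => (f i : ℕ)}

variable {k p}

lemma SSmod_mono (u : Fin n → A) {j j' : ℕ} (h : j ≤ j') : SSmod k p u j' ≤ SSmod k p u j := by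
  apply Submodule.span_mono
  rintro x ⟨f, ⟨m, hm, hfm⟩, rfl⟩
  exact ⟨f, ⟨m, le_trans h hm, hfm⟩, rfl⟩

lemma SSmod_ideal (u : Fin n → A) (hp : 1 < p) (hpow : ∀ i, u i ^ p = 0)
    (hcentral : ∀ i : Fin n, ∀ a : A,
      u i * a - a * u i ∈ Ideal.span {x : A | ∃ j : Fin n, ∃ b : A, i < j ∧ x = u j * b})
    (hspan : Submodule.span k
      (Set.range fun f : Fin n → Fin p => PBWmon u fun i => (f i : ℕ)) = ⊤) :
    ∀ j : ℕ, ∀ x ∈ SSmod k p u j, ∀ y : A, y * x ∈ SSmod k p u j ∧ x * y ∈ SSmod k p u j := by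
  suffices H : ∀ d j, n ≤ j + d →
      ∀ x ∈ SSmod k p u j, ∀ y : A, y * x ∈ SSmod k p u j ∧ x * y ∈ SSmod k p u j by
    intro j
    exact H n j (by omega)
  intro d
  induction d with
  | zero =>
    intro j hj x hx y
    have hempty : {x : A | ∃ f : Fin n → Fin p,
        (∃ m : Fin n, j ≤ (m : ℕ) ∧ 0 < (f m : ℕ)) ∧ x = PBWmon u fun i => (f i : ℕ)} = ∅ := by
      ext z
      simp only [Set.mem_setOf_eq, Set.mem_empty_iff_false, iff_false]
      rintro ⟨f, ⟨m, hm, _⟩, _⟩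
      have := m.isLt
      omega
    rw [SSmod, hempty, Submodule.span_empty, Submodule.mem_bot] at hx
    subst hx
    simp [Submodule.zero_mem]
  | succ d IH =>
    intro j hj
    by_cases hjd : n ≤ j + d
    · exact IH j hjd
    -- now j < n
    have hjn : j < n := by omega
    set jF : Fin n := ⟨j, hjn⟩ with hjF
    have hnext : n ≤ (j+1) + d := by omega
    have hC1 := IH (j+1) hnext
    have hmono : SSmod k p u (j+1) ≤ SSmod k p u j := SSmod_mono u (by omega)
    -- u m is a generator of SSmod (j+1) for m > j
    have hgen : ∀ m : Fin n, j < (m : ℕ) → u m ∈ SSmod k p u (j+1) := by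
      intro m hm
      apply Submodule.subset_span
      refine ⟨Function.update (fun _ => (⟨0, by omega⟩ : Fin p)) m ⟨1, hp⟩, ⟨m, by omega, ?_⟩, ?_⟩
      · rw [Function.update_self]; norm_num
      · have : (fun i => ((Function.update (fun _ => (⟨0, by omega⟩ : Fin p)) m ⟨1, hp⟩ i : Fin p) : ℕ)) =
            Function.update (fun _ => (0:ℕ)) m 1 := by
          funext i
          by_cases hi : i = m
          · subst hi; simp
          · simp [Function.update_of_ne hi]
        rw [this, PBWmon_single, pow_one]
    -- the commutator ideal T_{j} lands in SSmod (j+1)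
    have hT : ∀ x ∈ Ideal.span {x : A | ∃ m : Fin n, ∃ b : A, jF < m ∧ x = u m * b},
        x ∈ SSmod k p u (j+1) := by
      intro x hx
      refine Submodule.span_induction ?_ ?_ ?_ ?_ hx
      · rintro z ⟨m, b, hm, rfl⟩
        exact (hC1 (u m) (hgen m hm) b).2
      · exact Submodule.zero_mem _
      · intro z w _ _ hz hw; exact Submodule.add_mem _ hz hw
      · intro r z _ hz
        rw [smul_eq_mul]
        exact (hC1 z hz r).1
    -- commuting powers of u jF past arbitrary elements
    have hcommpow : ∀ (e : ℕ) (y : A), ∃ t ∈ SSmod k p u (j+1),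
        u jF ^ e * y = y * u jF ^ e + t := by
      intro e
      induction e with
      | zero => intro y; exact ⟨0, Submodule.zero_mem _, by simp⟩
      | succ e IHe =>
        intro y
        obtain ⟨t, ht, hte⟩ := IHe y
        have hc : u jF * y - y * u jF ∈ SSmod k p u (j+1) := hT _ (hcentral jF y)
        refine ⟨(u jF * y - y * u jF) * u jF ^ e + u jF * t, ?_, ?_⟩
        · exact Submodule.add_mem _ ((hC1 _ hc (u jF ^ e)).2 ) ((hC1 t ht (u jF)).1)
        · rw [pow_succ']
          rw [mul_assoc, hte]
          noncomm_ring
    -- right multiplication by a positive power of u jF stays in SSmod j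
    have hMR : ∀ (y : A) (e : ℕ), 1 ≤ e → y * u jF ^ e ∈ SSmod k p u j := by
      intro y e he
      have hy : y ∈ Submodule.span k
          (Set.range fun f : Fin n → Fin p => PBWmon u fun i => (f i : ℕ)) := by
        rw [hspan]; trivial
      refine Submodule.span_induction ?_ ?_ ?_ ?_ hy
      · rintro z ⟨f, rfl⟩
        by_cases hf : ∃ m : Fin n, j < (m : ℕ) ∧ 0 < (f m : ℕ)
        · obtain ⟨m, hm, hfm⟩ := hf
          have hz : PBWmon u (fun i => (f i : ℕ)) ∈ SSmod k p u (j+1) :=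
            Submodule.subset_span ⟨f, ⟨m, by omega, hfm⟩, rfl⟩
          exact hmono (hC1 _ hz (u jF ^ e)).2
        · push_neg at hf
          have hsupp : ∀ m : Fin n, jF < m → (f m : ℕ) = 0 := by
            intro m hm
            have := hf m (by exact hm)
            omega
          rw [PBWmon_mul_pow u _ jF hsupp e]
          by_cases hb : (f jF : ℕ) + e < p
          · apply Submodule.subset_span
            refine ⟨Function.update f jF ⟨(f jF : ℕ) + e, hb⟩, ⟨jF, le_refl _, ?_⟩, ?_⟩
            · rw [Function.update_self]
              simp; omega
            · congr 1
              funext i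
              by_cases hi : i = jF
              · subst hi; simp
              · simp [Function.update_of_ne hi]
          · rw [PBWmon_eq_zero u hpow _ jF (by rw [Function.update_self]; omega)]
            exact Submodule.zero_mem _
      · rw [zero_mul]; exact Submodule.zero_mem _
      · intro z w _ _ hz hw; rw [add_mul]; exact Submodule.add_mem _ hz hw
      · intro c z _ hz; rw [smul_mul_assoc]; exact Submodule.smul_mem _ c hz
    -- main claim at level j
    intro x hx
    refine Submodule.span_induction ?_ ?_ ?_ ?_ hx
    · rintro z ⟨f, ⟨m, hm, hfm⟩, rfl⟩
      intro y
      by_cases hf : ∃ m' : Fin n, j < (m' : ℕ) ∧ 0 < (f m' : ℕ)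
      · obtain ⟨m', hm', hfm'⟩ := hf
        have hz : PBWmon u (fun i => (f i : ℕ)) ∈ SSmod k p u (j+1) :=
          Submodule.subset_span ⟨f, ⟨m', by omega, hfm'⟩, rfl⟩
        exact ⟨hmono (hC1 _ hz y).1, hmono (hC1 _ hz y).2⟩
      · push_neg at hf
        have hsupp : ∀ m' : Fin n, jF < m' → ((f m' : ℕ)) = 0 := by
          intro m' hm'
          have := hf m' (by exact hm')
          omega
        have hmj : (m : ℕ) = j := by
          have h1 : ¬ (j < (m:ℕ) ∧ 0 < (f m : ℕ)) := by
            intro hcon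
            have := hf m hcon.1
            omega
          omega
        have he : 1 ≤ (f jF : ℕ) := by
          have : jF = m := by apply Fin.ext; simp [hjF, hmj]
          rw [this]
          omega
        have hsplit := PBWmon_split u (fun i => (f i : ℕ)) jF hsupp
        constructor
        · rw [hsplit, ← mul_assoc]
          exact hMR _ _ he
        · rw [hsplit]
          obtain ⟨t, ht, hte⟩ := hcommpow ((f jF : ℕ)) y
          rw [mul_assoc, hte, mul_add, ← mul_assoc]
          exact Submodule.add_mem _ (hMR _ _ he) (hmono (hC1 t ht _).1)
    · intro y; simp [Submodule.zero_mem]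
    · intro z w _ _ hz hw y
      refine ⟨?_, ?_⟩
      · rw [mul_add]; exact Submodule.add_mem _ (hz y).1 (hw y).1
      · rw [add_mul]; exact Submodule.add_mem _ (hz y).2 (hw y).2
    · intro c z _ hz y
      refine ⟨?_, ?_⟩
      · rw [mul_smul_comm]; exact Submodule.smul_mem _ c (hz y).1
      · rw [smul_mul_assoc]; exact Submodule.smul_mem _ c (hz y).2

end Aux3

section Aux4
variable {k : Type} [Field k] {A : Type} [Ring A] [Algebra k A] {p : ℕ}

lemma pow_big_eq_zero {x : A} (hx : x ^ p = 0) {N : ℕ} (hN : p ≤ N) : x ^ N = 0 := by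
  rw [← Nat.sub_add_cancel hN, pow_add, hx, mul_zero]

lemma indep_pows (hp : 0 < p) (v w : A) (hcomm : w * v = v * w)
    (hvp : v ^ p = 0) (hwp : w ^ p = 0) (hkey : v ^ (p-1) * w ^ (p-1) ≠ 0)
    (c : Fin p → Fin p → k)
    (hsum : ∑ x : Fin p, ∑ y : Fin p, c x y • (v ^ (x : ℕ) * w ^ (y : ℕ)) = 0) :
    ∀ x y, c x y = 0 := by
  classical
  by_contra hcon
  push_neg at hcon
  obtain ⟨x1, y1, hxy1⟩ := hcon
  have hC : Commute w v := hcomm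
  set sa : Finset (Fin p) := Finset.univ.filter (fun x => ∃ y, c x y ≠ 0) with hsa
  have hsane : sa.Nonempty := ⟨x1, by simp [hsa]; exact ⟨y1, hxy1⟩⟩
  set a0 := sa.min' hsane with ha0
  have ha0mem : a0 ∈ sa := sa.min'_mem hsane
  set sb : Finset (Fin p) := Finset.univ.filter (fun y => c a0 y ≠ 0) with hsb
  have hsbne : sb.Nonempty := by
    simp only [hsa, Finset.mem_filter, Finset.mem_univ, true_and] at ha0mem
    obtain ⟨y, hy⟩ := ha0mem
    exact ⟨y, by simp [hsb, hy]⟩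
  set b0 := sb.min' hsbne with hb0
  have hb0mem : b0 ∈ sb := sb.min'_mem hsbne
  have hb0ne : c a0 b0 ≠ 0 := by simpa [hsb] using hb0mem
  set W : A := w ^ (p - 1 - (b0 : ℕ)) * v ^ (p - 1 - (a0 : ℕ)) with hW
  have hterm : ∀ x y : Fin p,
      (c x y • (v ^ (x : ℕ) * w ^ (y : ℕ))) * W =
        c x y • (v ^ ((x : ℕ) + (p - 1 - (a0 : ℕ))) * w ^ ((y : ℕ) + (p - 1 - (b0 : ℕ)))) := by
    intro x y
    rw [smul_mul_assoc]
    congr 1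
    rw [hW, pow_add, pow_add]
    have h1 : w ^ (y:ℕ) * (w ^ (p-1-(b0:ℕ)) * v ^ (p-1-(a0:ℕ)))
        = v ^ (p-1-(a0:ℕ)) * (w ^ (y:ℕ) * w ^ (p-1-(b0:ℕ))) := by
      rw [← mul_assoc, ← pow_add, (hC.pow_pow _ _).eq, pow_add]
    rw [mul_assoc, h1, ← mul_assoc]
  have hzero : (∑ x : Fin p, ∑ y : Fin p, c x y • (v ^ (x : ℕ) * w ^ (y : ℕ))) * W = 0 := by
    rw [hsum, zero_mul]
  rw [Finset.sum_mul] at hzero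
  have hsimp : ∀ x ∈ Finset.univ, x ≠ a0 →
      (∑ y : Fin p, c x y • (v ^ (x:ℕ) * w ^ (y:ℕ))) * W = 0 := by
    intro x _ hx
    rw [Finset.sum_mul]
    apply Finset.sum_eq_zero
    intro y _
    rw [hterm]
    rcases lt_or_gt_of_ne hx with hlt | hgt
    · have : x ∉ sa := fun hmem => absurd (sa.min'_le x hmem) (not_le.mpr hlt)
      have : c x y = 0 := by
        simp only [hsa, Finset.mem_filter, Finset.mem_univ, true_and, not_exists, not_not] at this
        exact this y
      rw [this, zero_smul]
    · have hx' : (a0 : ℕ) < (x : ℕ) := hgt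
      have : v ^ ((x:ℕ) + (p - 1 - (a0:ℕ))) = 0 :=
        pow_big_eq_zero hvp (by have := a0.isLt; have := x.isLt; omega)
      rw [this, zero_mul, smul_zero]
  rw [Finset.sum_eq_single_of_mem a0 (Finset.mem_univ _) hsimp, Finset.sum_mul] at hzero
  have hsimp2 : ∀ y ∈ Finset.univ, y ≠ b0 →
      (c a0 y • (v ^ (a0:ℕ) * w ^ (y:ℕ))) * W = 0 := by
    intro y _ hy
    rw [hterm]
    rcases lt_or_gt_of_ne hy with hlt | hgt
    · have : y ∉ sb := fun hmem => absurd (sb.min'_le y hmem) (not_le.mpr hlt)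
      have : c a0 y = 0 := by simpa [hsb] using this
      rw [this, zero_smul]
    · have : w ^ ((y:ℕ) + (p - 1 - (b0:ℕ))) = 0 :=
        pow_big_eq_zero hwp (by have := b0.isLt; have := y.isLt; omega)
      rw [this, mul_zero, smul_zero]
  rw [Finset.sum_eq_single_of_mem b0 (Finset.mem_univ _) hsimp2, hterm] at hzero
  have he1 : (a0:ℕ) + (p - 1 - (a0:ℕ)) = p - 1 := by have := a0.isLt; omega
  have he2 : (b0:ℕ) + (p - 1 - (b0:ℕ)) = p - 1 := by have := b0.isLt; omega
  rw [he1, he2] at hzero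
  rcases smul_eq_zero.mp hzero with h | h
  · exact hb0ne h
  · exact hkey h

end Aux4

section Aux5
open MvPolynomial
variable {k : Type} [Field k] {p : ℕ}

lemma reduce_mod (hp : 0 < p) (F : MvPolynomial (Fin 2) k) :
    ∃ c : Fin p → Fin p → k,
      F - ∑ x : Fin p, ∑ y : Fin p,
        c x y • ((X 0 : MvPolynomial (Fin 2) k) ^ (x : ℕ) * (X 1) ^ (y : ℕ)) ∈
      Ideal.span ({(X 0 : MvPolynomial (Fin 2) k) ^ p, (X 1) ^ p} : Set (MvPolynomial (Fin 2) k)) := by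
  classical
  set I := Ideal.span ({(X 0 : MvPolynomial (Fin 2) k) ^ p, (X 1) ^ p} : Set (MvPolynomial (Fin 2) k))
  set g : Fin p × Fin p → MvPolynomial (Fin 2) k :=
    fun q => (X 0) ^ (q.1 : ℕ) * (X 1) ^ (q.2 : ℕ) with hg
  have hmem : F ∈ I.restrictScalars k ⊔ Submodule.span k (Set.range g) := by
    nth_rewrite 1 [F.as_sum]
    apply Submodule.sum_mem
    intro d _
    have hmon : monomial d (coeff d F) = (coeff d F) • ((X 0 : MvPolynomial (Fin 2) k) ^ (d 0) * (X 1) ^ (d 1)) := by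
      rw [monomial_eq, smul_eq_C_mul]
      congr 1
      rw [Finsupp.prod_fintype _ _ (fun i => pow_zero _), Fin.prod_univ_two]
    rw [hmon]
    apply Submodule.smul_mem
    by_cases h0 : p ≤ d 0
    · apply Submodule.mem_sup_left
      rw [Submodule.restrictScalars_mem]
      have : (X 0 : MvPolynomial (Fin 2) k) ^ (d 0) * (X 1) ^ (d 1) =
          (X 0) ^ p * ((X 0) ^ (d 0 - p) * (X 1) ^ (d 1)) := by
        rw [← mul_assoc, ← pow_add, Nat.add_sub_cancel' h0]
      rw [this]
      exact Ideal.mul_mem_right _ _ (Ideal.subset_span (by simp))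
    · by_cases h1 : p ≤ d 1
      · apply Submodule.mem_sup_left
        rw [Submodule.restrictScalars_mem]
        have : (X 0 : MvPolynomial (Fin 2) k) ^ (d 0) * (X 1) ^ (d 1) =
            ((X 0) ^ (d 0) * (X 1) ^ (d 1 - p)) * (X 1) ^ p := by
          rw [mul_assoc, ← pow_add, Nat.sub_add_cancel h1]
        rw [this]
        exact Ideal.mul_mem_left _ _ (Ideal.subset_span (by simp))
      · apply Submodule.mem_sup_right
        apply Submodule.subset_span
        exact ⟨(⟨d 0, by omega⟩, ⟨d 1, by omega⟩), rfl⟩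
  rw [Submodule.mem_sup] at hmem
  obtain ⟨y, hy, z, hz, hyz⟩ := hmem
  rw [Submodule.mem_span_range_iff_exists_fun] at hz
  obtain ⟨cc, hcc⟩ := hz
  refine ⟨fun x y => cc (x, y), ?_⟩
  have : ∑ x : Fin p, ∑ y : Fin p, cc (x, y) •
      ((X 0 : MvPolynomial (Fin 2) k) ^ (x : ℕ) * (X 1) ^ (y : ℕ)) = z := by
    rw [← hcc, Fintype.sum_prod_type]
  rw [this, ← hyz]
  simpa using hy

end Aux5


/-- With `A` as in the PBW setting (ordered monomials form a basis), if
`v = a_1 u_1 + ⋯ + a_n u_n` with `a_i ≠ 0` for some `i < n` and `v^p = 0`,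
then `v^{p-1} ∉ A u_n`, the subalgebra generated by `v` and `u_n` is
isomorphic to `k[s,t]/(s^p, t^p)`, and `v^{p-1} u_n^{p-1} ≠ 0`. -/
theorem stmt_5 (k : Type) [Field k] (p : ℕ) [Fact p.Prime] [CharP k p]
    (A : Type) [Ring A] [Algebra k A] (n : ℕ) (hn : 1 < n) (u : Fin n → A)
    (hgen : Algebra.adjoin k (Set.range u) = ⊤)
    (hpow : ∀ i, u i ^ p = 0)
    (hcentral : ∀ i : Fin n, ∀ a : A,
      u i * a - a * u i ∈ Ideal.span {x : A | ∃ j : Fin n, ∃ b : A, i < j ∧ x = u j * b})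
    (hlast : ∀ a : A, u ⟨n - 1, by omega⟩ * a = a * u ⟨n - 1, by omega⟩)
    (hdim : Module.finrank k A = p ^ n)
    (hbasis : LinearIndependent k
        (fun f : Fin n → Fin p =>
          ((List.finRange n).map fun i => u i ^ (f i : ℕ)).prod) ∧
      Submodule.span k
        (Set.range fun f : Fin n → Fin p =>
          ((List.finRange n).map fun i => u i ^ (f i : ℕ)).prod) = ⊤)
    (a : Fin n → k) (v : A) (hv : v = ∑ i, a i • u i)
    (hne : ∃ i : Fin n, (i : ℕ) < n - 1 ∧ a i ≠ 0)
    (hvp : v ^ p = 0) :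
    v ^ (p - 1) ∉ Ideal.span ({u ⟨n - 1, by omega⟩} : Set A) ∧
    Nonempty ((Algebra.adjoin k ({v, u ⟨n - 1, by omega⟩} : Set A)) ≃ₐ[k]
      (MvPolynomial (Fin 2) k ⧸
        Ideal.span ({(X 0 : MvPolynomial (Fin 2) k) ^ p, (X 1) ^ p}
          : Set (MvPolynomial (Fin 2) k)))) ∧
    v ^ (p - 1) * (u ⟨n - 1, by omega⟩) ^ (p - 1) ≠ 0 := by
  classical
  obtain ⟨hLI, hspan⟩ := hbasis
  have hp2 : 1 < p := (Fact.out : p.Prime).one_lt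
  have hp0 : 0 < p := by omega
  have hn1 : n - 1 < n := by omega
  set nF : Fin n := ⟨n - 1, hn1⟩ with hnF
  -- minimal index with nonzero coefficient
  have hsane : (Finset.univ.filter (fun i : Fin n => a i ≠ 0)).Nonempty := by
    obtain ⟨i, _, hi⟩ := hne
    exact ⟨i, by simp [hi]⟩
  set i0 : Fin n := Finset.min' _ hsane with hi0
  have hai0 : a i0 ≠ 0 := by
    have := Finset.min'_mem _ hsane
    simpa using this
  have hi0min : ∀ j : Fin n, a j ≠ 0 → i0 ≤ j := fun j hj =>
    Finset.min'_le _ _ (by simp [hj])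
  have hi0lt : (i0 : ℕ) < n - 1 := by
    obtain ⟨i, hilt, hi⟩ := hne
    have h1 : (i0 : ℕ) ≤ (i : ℕ) := hi0min i hi
    omega
  have hi0nF : i0 ≠ nF := by
    intro h
    rw [h] at hi0lt
    simp [hnF] at hi0lt
  -- the two-sided ideal T generated by u_j, j > i0
  set T : Ideal A := Ideal.span {x : A | ∃ jj : Fin n, ∃ c : A, i0 < jj ∧ x = u jj * c} with hT
  have hTr : ∀ x ∈ T, ∀ y : A, x * y ∈ T := by
    intro x hx y
    refine Submodule.span_induction ?_ ?_ ?_ ?_ hx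
    · rintro z ⟨jj, c, hjj, rfl⟩
      exact Ideal.subset_span ⟨jj, c * y, hjj, by rw [mul_assoc]⟩
    · rw [zero_mul]; exact T.zero_mem
    · intro z w _ _ hz hw; rw [add_mul]; exact T.add_mem hz hw
    · intro r z _ hz; rw [smul_eq_mul, mul_assoc]; exact T.mul_mem_left r hz
  have hTk : ∀ (r : k) (x : A), x ∈ T → r • x ∈ T := fun r x hx => by
    rw [Algebra.smul_def]; exact Ideal.mul_mem_left _ _ hx
  have hvw : ∃ w ∈ T, v = a i0 • u i0 + w := by
    refine ⟨∑ j ∈ Finset.univ.erase i0, a j • u j, ?_, ?_⟩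
    · apply Submodule.sum_mem
      intro j hj
      have hjne : j ≠ i0 := (Finset.mem_erase.mp hj).1
      by_cases hja : a j = 0
      · rw [hja, zero_smul]; exact T.zero_mem
      · have hij : i0 < j := lt_of_le_of_ne (hi0min j hja) (Ne.symm hjne)
        have hrw : a j • u j = u j * (algebraMap k A (a j)) := by
          rw [Algebra.smul_def, Algebra.commutes]
        rw [hrw]
        exact Ideal.subset_span ⟨j, _, hij, rfl⟩
    · rw [hv, ← Finset.add_sum_erase _ _ (Finset.mem_univ i0)]
  obtain ⟨w, hwT, hvweq⟩ := hvw
  have hvpow : ∀ m : ℕ, ∃ t ∈ T, v ^ m = (a i0 ^ m) • u i0 ^ m + t := by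
    intro m
    induction m with
    | zero => exact ⟨0, T.zero_mem, by simp⟩
    | succ m IH =>
      obtain ⟨t, ht, hte⟩ := IH
      refine ⟨(a i0 ^ m • u i0 ^ m) * w + t * v, ?_, ?_⟩
      · apply T.add_mem
        · rw [smul_mul_assoc]; exact hTk _ _ (Ideal.mul_mem_left _ _ hwT)
        · exact hTr t ht v
      · have h5 : (a i0 ^ m • u i0 ^ m) * (a i0 • u i0) = a i0 ^ (m+1) • u i0 ^ (m+1) := by
          rw [smul_mul_assoc, mul_smul_comm, smul_smul, ← pow_succ, ← pow_succ]
        have h6 : (a i0 ^ m • u i0 ^ m) * v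
            = a i0 ^ (m+1) • u i0 ^ (m+1) + (a i0 ^ m • u i0 ^ m) * w := by
          rw [hvweq, mul_add, h5]
        rw [pow_succ, hte, add_mul, h6, add_assoc]
  -- SSmod machinery
  have hspan' : Submodule.span k
      (Set.range fun f : Fin n → Fin p => PBWmon u fun i => (f i : ℕ)) = ⊤ := hspan
  have hSS := SSmod_ideal u hp2 hpow hcentral hspan'
  have hum : ∀ m : Fin n, ∀ j : ℕ, j ≤ (m : ℕ) → u m ∈ SSmod k p u j := by
    intro m j hm
    apply Submodule.subset_span
    refine ⟨Function.update (fun _ => (⟨0, by omega⟩ : Fin p)) m ⟨1, hp2⟩,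
      ⟨m, hm, by simp [Function.update_self]⟩, ?_⟩
    have hfn : (fun i => ((Function.update (fun _ => (⟨0, by omega⟩ : Fin p)) m ⟨1, hp2⟩ i
        : Fin p) : ℕ)) = Function.update (fun _ => (0:ℕ)) m 1 := by
      funext i
      by_cases hi : i = m
      · subst hi; simp
      · simp [Function.update_of_ne hi]
    rw [hfn, PBWmon_single, pow_one]
  have hTS : ∀ x ∈ T, x ∈ SSmod k p u ((i0 : ℕ) + 1) := by
    intro x hx
    refine Submodule.span_induction ?_ ?_ ?_ ?_ hx
    · rintro z ⟨jj, c, hjj, rfl⟩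
      exact (hSS _ _ (hum jj _ (by exact hjj)) c).2
    · exact Submodule.zero_mem _
    · intro z w' _ _ hz hw; exact Submodule.add_mem _ hz hw
    · intro r z _ hz
      rw [smul_eq_mul]
      exact (hSS _ _ hz r).1
  -- the target monomial
  set gstar : Fin n → ℕ := fun m => if m = i0 ∨ m = nF then p - 1 else 0 with hgstar
  set fstar : Fin n → Fin p := fun m =>
    if m = i0 ∨ m = nF then ⟨p - 1, by omega⟩ else ⟨0, by omega⟩ with hfstar
  have hgf : (fun i => ((fstar i : Fin p) : ℕ)) = gstar := by
    funext i
    by_cases hi : i = i0 ∨ i = nF <;> simp [hfstar, hgstar, hi]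
  set Z : Submodule k A := Submodule.span k
    ((fun f : Fin n → Fin p => PBWmon u fun i => (f i : ℕ)) '' {f | f ≠ fstar}) with hZ
  set q : A := u nF ^ (p - 1) with hq
  have hsuppAll : ∀ g : Fin n → ℕ, ∀ m : Fin n, nF < m → g m = 0 := by
    intro g m hm
    exfalso
    have h1 := m.isLt
    have h2 : (nF : ℕ) < (m : ℕ) := hm
    simp [hnF] at h2
    omega
  have hZq : ∀ x ∈ SSmod k p u ((i0 : ℕ) + 1), x * q ∈ Z := by
    intro x hx
    refine Submodule.span_induction ?_ ?_ ?_ ?_ hx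
    · rintro z ⟨f, ⟨m, hm, hfm⟩, rfl⟩
      rw [hq, PBWmon_mul_pow u _ nF (hsuppAll _) (p - 1)]
      by_cases hfn : 0 < (f nF : ℕ)
      · rw [PBWmon_eq_zero u hpow _ nF (by rw [Function.update_self]; omega)]
        exact Submodule.zero_mem _
      · have hfn0 : (f nF : ℕ) = 0 := by omega
        have hmnF : m ≠ nF := by intro h; rw [h] at hfm; omega
        have hmi0 : m ≠ i0 := by
          intro h; rw [h] at hm; omega
        apply Submodule.subset_span
        refine ⟨Function.update f nF ⟨p - 1, by omega⟩, ?_, ?_⟩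
        · intro hcon
          have h1 : Function.update f nF (⟨p - 1, by omega⟩ : Fin p) m = f m :=
            Function.update_of_ne hmnF _ _
          rw [hcon] at h1
          have h2 : fstar m = ⟨0, by omega⟩ := by simp [hfstar, hmi0, hmnF]
          rw [h2] at h1
          rw [← h1] at hfm
          simp at hfm
        · have hfe : (fun i => ((Function.update f nF (⟨p - 1, by omega⟩ : Fin p) i : Fin p) : ℕ))
              = Function.update (fun i => ((f i : Fin p) : ℕ)) nF ((f nF : ℕ) + (p - 1)) := by
            funext i
            by_cases hi : i = nF
            · subst hi
              simp [Function.update_self, hfn0]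
            · rw [Function.update_of_ne hi, Function.update_of_ne hi]
          exact congrArg (PBWmon u) hfe
    · rw [zero_mul]; exact Submodule.zero_mem _
    · intro z w' _ _ hz hw; rw [add_mul]; exact Submodule.add_mem _ hz hw
    · intro r z _ hz; rw [smul_mul_assoc]; exact Submodule.smul_mem _ r hz
  have hu0 : u i0 ^ (p - 1) * q = PBWmon u gstar := by
    rw [← PBWmon_single u i0 (p - 1), hq, PBWmon_mul_pow u _ nF (hsuppAll _) (p - 1)]
    congr 1
    funext i
    by_cases hi : i = nF
    · subst hi
      rw [Function.update_self]
      rw [Function.update_of_ne (Ne.symm hi0nF)]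
      simp [hgstar]
    · rw [Function.update_of_ne hi]
      by_cases hii : i = i0
      · subst hii
        rw [Function.update_self]
        simp [hgstar]
      · rw [Function.update_of_ne hii]
        simp [hgstar, hii, hi]
  have hnotZ : PBWmon u gstar ∉ Z := by
    rw [← hgf]
    exact hLI.notMem_span_image (s := {f | f ≠ fstar}) (by simp)
  obtain ⟨t, htT, hteq⟩ := hvpow (p - 1)
  have hkey : v ^ (p - 1) * q ≠ 0 := by
    intro h0
    rw [hteq, add_mul, smul_mul_assoc, hu0] at h0
    have hc : a i0 ^ (p - 1) ≠ 0 := pow_ne_zero _ hai0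
    apply hnotZ
    have h2 : (a i0 ^ (p - 1)) • PBWmon u gstar = -(t * q) := by
      rw [eq_neg_iff_add_eq_zero]
      exact h0
    have h3 : PBWmon u gstar = (a i0 ^ (p - 1))⁻¹ • -(t * q) := by
      rw [← h2, smul_smul, inv_mul_cancel₀ hc, one_smul]
    rw [h3]
    exact Submodule.smul_mem _ _ (Submodule.neg_mem _ (hZq t (hTS t htT)))
  have hupow : u nF * q = 0 := by
    have h7 : (p - 1) + 1 = p := by omega
    rw [hq, ← pow_succ', h7, hpow]
  refine ⟨?_, ?_, hkey⟩
  · intro hmem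
    obtain ⟨r, hr⟩ := Submodule.mem_span_singleton.mp hmem
    apply hkey
    rw [← hr, smul_eq_mul, mul_assoc, hupow, mul_zero]
  · -- the algebra isomorphism
    have hcommVU : ∀ x ∈ ({v, u nF} : Set A), ∀ y ∈ ({v, u nF} : Set A), x * y = y * x := by
      rintro x (rfl | rfl) y (rfl | rfl)
      · rfl
      · exact (hlast x).symm
      · exact hlast y
      · rfl
    set E := Algebra.adjoin k ({v, u nF} : Set A) with hE
    letI : CommRing E := Algebra.adjoinCommRingOfComm k hcommVU
    letI : Algebra k ↥E := E.algebra
    set v' : E := ⟨v, Algebra.subset_adjoin (Set.mem_insert _ _)⟩ with hv'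
    set u' : E := ⟨u nF, Algebra.subset_adjoin (Set.mem_insert_of_mem _ rfl)⟩ with hu'
    set φ : MvPolynomial (Fin 2) k →ₐ[k] E := MvPolynomial.aeval (R := k) ![v', u'] with hφ
    have hφ0 : φ (X 0) = v' := by simp [hφ]
    have hφ1 : φ (X 1) = u' := by simp [hφ]
    set I : Ideal (MvPolynomial (Fin 2) k) :=
      Ideal.span ({(X 0 : MvPolynomial (Fin 2) k) ^ p, (X 1) ^ p}
        : Set (MvPolynomial (Fin 2) k)) with hI
    have hv'p : v' ^ p = 0 := by
      apply Subtype.ext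
      show ((v' ^ p : E) : A) = 0
      rw [SubmonoidClass.coe_pow]
      exact hvp
    have hu'p : u' ^ p = 0 := by
      apply Subtype.ext
      show ((u' ^ p : E) : A) = 0
      rw [SubmonoidClass.coe_pow]
      exact hpow nF
    have hker : ∀ F ∈ I, φ F = 0 := by
      intro F hF
      rw [hI] at hF
      refine Submodule.span_induction ?_ ?_ ?_ ?_ hF
      · rintro x (rfl | rfl)
        · rw [map_pow, hφ0, hv'p]
        · rw [map_pow, hφ1, hu'p]
      · exact map_zero φ
      · intro x y _ _ hx hy; rw [map_add, hx, hy, add_zero]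
      · intro r x _ hx; rw [smul_eq_mul, map_mul, hx, mul_zero]
    set ψ := Ideal.Quotient.liftₐ I φ hker with hψ
    have hψmk : ∀ F, ψ (Ideal.Quotient.mk I F) = φ F := by
      intro F
      rw [hψ, Ideal.Quotient.liftₐ_apply]
      rfl
    have hEtop : Algebra.adjoin k ({v', u'} : Set E) = ⊤ := by
      apply Subalgebra.map_injective (f := E.val) Subtype.val_injective
      rw [AlgHom.map_adjoin, Algebra.map_top, Subalgebra.range_val]
      rw [Set.image_insert_eq, Set.image_singleton]
      rfl
    have hsurj : Function.Surjective ψ := by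
      intro y
      have hy : y ∈ (⊤ : Subalgebra k E) := trivial
      rw [← hEtop] at hy
      have hr : Algebra.adjoin k ({v', u'} : Set E) ≤ φ.range := by
        apply Algebra.adjoin_le
        rintro x (rfl | rfl)
        · exact ⟨X 0, hφ0⟩
        · exact ⟨X 1, hφ1⟩
      obtain ⟨F, hF⟩ := hr hy
      exact ⟨Ideal.Quotient.mk I F, by rw [hψmk]; exact hF⟩
    have hinj : Function.Injective ψ := by
      rw [injective_iff_map_eq_zero]
      intro qq hqq
      obtain ⟨F, rfl⟩ := Ideal.Quotient.mk_surjective qq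
      rw [hψmk] at hqq
      obtain ⟨c, hc⟩ := reduce_mod (k := k) hp0 F
      set r : MvPolynomial (Fin 2) k := ∑ x : Fin p, ∑ y : Fin p,
        c x y • ((X 0 : MvPolynomial (Fin 2) k) ^ (x : ℕ) * (X 1) ^ (y : ℕ)) with hrdef
      have hφr : φ r = 0 := by
        have h8 : φ (F - r) = 0 := hker _ (by rw [hI]; exact hc)
        rw [map_sub, hqq, zero_sub, neg_eq_zero] at h8
        exact h8
      have hφrval : ∑ x : Fin p, ∑ y : Fin p,
          c x y • (v ^ (x : ℕ) * (u nF) ^ (y : ℕ)) = 0 := by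
        have h9 : (E.val) (φ r) = 0 := by rw [hφr, map_zero]
        rw [hrdef] at h9
        simp only [map_sum, map_smul, map_mul, map_pow, hφ0, hφ1] at h9
        simpa using h9
      have hc0 : ∀ x y, c x y = 0 :=
        indep_pows hp0 v (u nF) (hlast v) hvp (hpow nF) hkey c hφrval
      have hr0 : r = 0 := by
        rw [hrdef]
        apply Finset.sum_eq_zero
        intro x _
        apply Finset.sum_eq_zero
        intro y _
        rw [hc0, zero_smul]
      rw [hr0, sub_zero] at hc
      exact Ideal.Quotient.eq_zero_iff_mem.mpr hc
    exact ⟨(AlgEquiv.ofBijective ψ ⟨hinj, hsurj⟩).symm⟩
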